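/- Let ξ ∈ ℝ, T > 0, and let x : [0,T] → ℝ be differentiable with at most M < ∞ alternating critical points, i.e., times t₀ < t₁ < ⋯ < t_M in [0,T] with x'(t_j) = 0 for all j and such that every critical point of x is among them, where consecutive ones satisfy sgn(x(t_i) − ξ) = −sgn(x(t_{i+1}) − ξ). Then for every ε > 0 there exists δ > 0 such that every differentiable y : [0,T] → ℝ with sup_{t∈[0,T]} |x(t) − y(t)| < δ satisfies ∫_0^T |Θ_ξ(x)(t) − Θ_ξ(y)(t)| dt < ε. -/

import Mathlib

open Set MeasureTheory Filter Topology

/-- The thresholded version `Θ_ξ(x)` of a real-valued function `x`: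
`0` where `x t ≤ ξ` and `1` where `x t > ξ`. -/
noncomputable def Theta (ξ : ℝ) (x : ℝ → ℝ) : ℝ → ℝ := fun t => if x t ≤ ξ then 0 else 1

/-- A finite set in a T1 space has no accumulation points. -/
lemma finite_no_accPt {D : Set ℝ} (hD : D.Finite) (t : ℝ) : ¬ AccPt t (𝓟 D) := by
  intro hacc
  rw [accPt_iff_nhds] at hacc
  have hcl : IsClosed (D \ {t}) := ((hD.subset diff_subset).isClosed)
  have hU : (D \ {t})ᶜ ∈ 𝓝 t := hcl.isOpen_compl.mem_nhds (by simp)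
  obtain ⟨y, ⟨hyU, hyD⟩, hyt⟩ := hacc _ hU
  exact hyU ⟨hyD, hyt⟩

/-- Theorem 2.6: let `x : [0,T] → ℝ` be differentiable with at most `M` alternating
critical points `tc 0 < tc 1 < ⋯ < tc M` (every critical point of `x` is among them, and
consecutive ones lie on opposite sides of the threshold `ξ`). Then for every `ε > 0` there
is `δ > 0` such that every differentiable `y` with `sup |x - y| < δ` satisfies
`‖Θ_ξ(x) - Θ_ξ(y)‖₁ < ε`. -/
theorem stmt5 (ξ T : ℝ) (hT : 0 < T) (M : ℕ) (x : ℝ → ℝ)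
    (hx : DifferentiableOn ℝ x (Icc 0 T))
    (tc : Fin (M + 1) → ℝ) (htc : StrictMono tc)
    (htcmem : ∀ j, tc j ∈ Icc (0:ℝ) T)
    (htcrit : ∀ j, derivWithin x (Icc (0:ℝ) T) (tc j) = 0)
    (hall : ∀ s ∈ Icc (0:ℝ) T, derivWithin x (Icc (0:ℝ) T) s = 0 → ∃ j, tc j = s)
    (halt : ∀ i : Fin M,
      Real.sign (x (tc i.castSucc) - ξ) = - Real.sign (x (tc i.succ) - ξ)) :
    ∀ ε > 0, ∃ δ > 0, ∀ y : ℝ → ℝ, DifferentiableOn ℝ y (Icc 0 T) →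
      (∀ t ∈ Icc (0:ℝ) T, |x t - y t| < δ) →
      ∫ t in (0:ℝ)..T, |Theta ξ x t - Theta ξ y t| < ε := by
  intro ε hε
  have hxc : ContinuousOn x (Icc 0 T) := hx.continuousOn
  set S : Set ℝ := Icc 0 T ∩ x ⁻¹' {ξ} with hSdef
  -- S is closed
  have hScl : IsClosed S :=
    hxc.preimage_isClosed_of_isClosed isClosed_Icc isClosed_singleton
  -- at any accumulation point of S (that lies in S), the derivative vanishes
  have hder : ∀ t ∈ S, AccPt t (𝓟 S) → ∃ j, tc j = t := by
    intro t ht hacc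
    have htI : t ∈ Icc (0:ℝ) T := ht.1
    have hd : HasDerivWithinAt x (derivWithin x (Icc 0 T) t) (Icc 0 T) t :=
      (hx t htI).hasDerivWithinAt
    have hne : (𝓝[S \ {t}] t).NeBot := by
      rw [AccPt] at hacc
      have hset : {t}ᶜ ∩ S = S \ {t} := by ext u; simp [mem_diff, and_comm]
      have : 𝓝[≠] t ⊓ 𝓟 S = 𝓝[S \ {t}] t := by
        rw [nhdsWithin, nhdsWithin, inf_assoc, inf_principal, hset]
      rwa [this] at hacc
    have h1 : Tendsto (slope x t) (𝓝[S \ {t}] t) (𝓝 (derivWithin x (Icc 0 T) t)) := by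
      refine (hasDerivWithinAt_iff_tendsto_slope.mp hd).mono_left
        (nhdsWithin_mono t ?_)
      exact diff_subset_diff_left inter_subset_left
    have h2 : Tendsto (slope x t) (𝓝[S \ {t}] t) (𝓝 0) := by
      refine Tendsto.congr' ?_ tendsto_const_nhds
      filter_upwards [self_mem_nhdsWithin] with u hu
      have hxu : x u = ξ := hu.1.2
      have hxt : x t = ξ := ht.2
      simp [slope, hxu, hxt, sub_self]
    have h0 : derivWithin x (Icc (0:ℝ) T) t = 0 := tendsto_nhds_unique h1 h2
    exact hall t htI h0
  -- S is countable
  have hSc : S.Countable := by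
    by_contra hunc
    obtain ⟨D, Dperf, ⟨t, htD⟩, hDS⟩ :=
      exists_perfect_nonempty_of_isClosed_of_not_countable hScl hunc
    have hDfin : D.Finite := by
      refine (Set.finite_range tc).subset ?_
      intro u huD
      obtain ⟨j, hj⟩ := hder u (hDS huD)
        ((Dperf.acc u huD).mono (principal_mono.mpr hDS))
      exact ⟨j, hj⟩
    exact finite_no_accPt hDfin t (Dperf.acc t htD)
  have hS0 : volume S = 0 := hSc.measure_zero volume
  -- the approximating sets
  have hA : ∀ c : ℝ, 0 < c → ∃ u : Set ℝ, IsOpen u ∧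
      x ⁻¹' Metric.ball ξ c ∩ Icc 0 T = u ∩ Icc 0 T := by
    intro c hc
    exact (continuousOn_iff'.mp hxc) (Metric.ball ξ c) Metric.isOpen_ball
  choose u hu hux using fun n : ℕ => hA (1 / (n + 1)) (by positivity)
  set A : ℕ → Set ℝ := fun n => u n ∩ Icc 0 T with hAdef
  have hAmem : ∀ n t, t ∈ A n ↔ (t ∈ Icc (0:ℝ) T ∧ |x t - ξ| < 1 / (n + 1)) := by
    intro n t
    constructor
    · intro ht
      have h : t ∈ x ⁻¹' Metric.ball ξ (1 / (n + 1)) ∩ Icc 0 T := by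
        rw [hux n]; exact ht
      exact ⟨h.2, by simpa [Real.dist_eq] using h.1⟩
    · intro ⟨ht1, ht2⟩
      have h : t ∈ x ⁻¹' Metric.ball ξ (1 / (n + 1)) ∩ Icc 0 T :=
        ⟨by simpa [Real.dist_eq] using ht2, ht1⟩
      rw [hux n] at h; exact h
  have hAmeas : ∀ n, MeasurableSet (A n) := fun n =>
    ((hu n).measurableSet).inter measurableSet_Icc
  have hAanti : Antitone A := by
    intro m n hmn t ht
    rw [hAmem] at ht ⊢
    refine ⟨ht.1, lt_of_lt_of_le ht.2 ?_⟩
    apply one_div_le_one_div_of_le (by positivity)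
    have : (m : ℝ) ≤ n := Nat.cast_le.mpr hmn
    linarith
  have hAib : (⋂ n, A n) = S := by
    ext t
    simp only [mem_iInter, hAmem, hSdef, mem_inter_iff, mem_preimage, mem_singleton_iff]
    constructor
    · intro h
      refine ⟨(h 0).1, ?_⟩
      by_contra hne
      have habs : 0 < |x t - ξ| := abs_pos.mpr (sub_ne_zero.mpr hne)
      obtain ⟨n, hn⟩ := exists_nat_one_div_lt habs
      exact absurd ((h n).2) (not_lt.mpr hn.le)
    · intro ⟨h1, h2⟩ n
      exact ⟨h1, by rw [h2, sub_self, abs_zero]; positivity⟩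
  have hfin : volume (A 0) ≠ ⊤ := by
    refine ne_of_lt (lt_of_le_of_lt (measure_mono inter_subset_right) ?_)
    simp [Real.volume_Icc]
  have htend : Tendsto (volume ∘ A) atTop (𝓝 0) := by
    have := tendsto_measure_iInter_atTop (μ := volume)
      (fun n => (hAmeas n).nullMeasurableSet) hAanti ⟨0, hfin⟩
    rwa [hAib, hS0] at this
  have hev : ∀ᶠ n in atTop, volume (A n) < ENNReal.ofReal ε :=
    htend.eventually_lt_const (by simpa using hε)
  obtain ⟨n, hn⟩ := hev.exists
  refine ⟨1 / (n + 1), by positivity, ?_⟩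
  intro y hy hxy
  -- key pointwise bound
  have key : ∀ t ∈ Icc (0:ℝ) T,
      |Theta ξ x t - Theta ξ y t| ≤ (A n).indicator (fun _ => (1:ℝ)) t := by
    intro t ht
    by_cases h1 : x t ≤ ξ <;> by_cases h2 : y t ≤ ξ
    · simp [Theta, h1, h2, Set.indicator_nonneg]
    · have htA : t ∈ A n := by
        rw [hAmem]
        refine ⟨ht, ?_⟩
        have := hxy t ht
        have : ξ - x t < 1 / (n + 1) := by
          push_neg at h2
          calc ξ - x t < y t - x t := by linarith
          _ ≤ |x t - y t| := by rw [abs_sub_comm]; exact le_abs_self _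
          _ < 1 / (n + 1) := hxy t ht
        rw [abs_sub_lt_iff]
        constructor
        · linarith [sub_nonneg.mpr h1, show (0:ℝ) < 1 / (n+1) by positivity]
        · linarith
      simp [Theta, h1, h2, htA]
    · have htA : t ∈ A n := by
        rw [hAmem]
        refine ⟨ht, ?_⟩
        push_neg at h1
        have : x t - ξ < 1 / (n + 1) := by
          calc x t - ξ ≤ x t - y t := by linarith
          _ ≤ |x t - y t| := le_abs_self _
          _ < 1 / (n + 1) := hxy t ht
        rw [abs_sub_lt_iff]
        constructor
        · linarith
        · linarith [show (0:ℝ) < 1 / (n+1) by positivity]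
      simp [Theta, h1, h2, htA]
    · simp [Theta, h1, h2, Set.indicator_nonneg]
  rw [intervalIntegral.integral_of_le hT.le]
  have hIind : Integrable ((A n).indicator (fun _ => (1:ℝ)))
      (volume.restrict (Ioc 0 T)) := by
    rw [integrable_indicator_iff (hAmeas n)]
    refine (integrableOn_const_iff (C := (1:ℝ))).mpr (Or.inr ?_)
    rw [Measure.restrict_apply (hAmeas n)]
    exact lt_of_le_of_lt (measure_mono inter_subset_left) (hn.trans_le le_top)
  have hmono : ∫ t in Ioc 0 T, |Theta ξ x t - Theta ξ y t| ≤
      ∫ t in Ioc 0 T, (A n).indicator (fun _ => (1:ℝ)) t := by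
    refine integral_mono_of_nonneg (ae_of_all _ fun t => abs_nonneg _) hIind ?_
    rw [EventuallyLE, ae_restrict_iff' measurableSet_Ioc]
    exact ae_of_all _ fun t ht => key t (Ioc_subset_Icc_self ht)
  refine lt_of_le_of_lt hmono ?_
  rw [integral_indicator (hAmeas n)]
  simp only [integral_const, smul_eq_mul, mul_one]
  rw [Measure.restrict_restrict (hAmeas n)]
  rw [measureReal_restrict_apply_univ, measureReal_def]
  calc (volume (A n ∩ Ioc 0 T)).toReal ≤ (volume (A n)).toReal := by
        apply ENNReal.toReal_mono (ne_of_lt (hn.trans_le le_top))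
        exact measure_mono inter_subset_left
  _ < ε := ENNReal.toReal_lt_of_lt_ofReal hn
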